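/- For every nonzero rational number x, the sum of all valuations ∑_{p ≤ ∞} v_p(x) equals 0, where v_p(x) = −ord_p(x)·log p for each prime p and v_∞(x) = log|x|. -/

import Mathlib

theorem aux_nat (n : ℕ) (hn : n ≠ 0) :
    HasSum (fun p : Nat.Primes => (padicValNat p n : ℝ) * Real.log p) (Real.log n) := by
  set f : Nat.Primes → ℝ := fun p => (padicValNat p n : ℝ) * Real.log p with hf
  set e : {q // q ∈ n.primeFactors} ↪ Nat.Primes :=
    ⟨fun q => ⟨q.1, Nat.prime_of_mem_primeFactors q.2⟩,
      by intro a b h; exact Subtype.ext (Subtype.mk_eq_mk.mp h)⟩ with he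
  set s : Finset Nat.Primes := n.primeFactors.attach.map e with hs
  have hvanish : ∀ p : Nat.Primes, p ∉ s → f p = 0 := by
    intro p hp
    have hnd : ¬ (p : ℕ) ∣ n := by
      intro hd
      exact hp (Finset.mem_map.2 ⟨⟨p, Nat.mem_primeFactors.2 ⟨p.2, hd, hn⟩⟩,
        Finset.mem_attach _ _, rfl⟩)
    have : padicValNat p n = 0 := by
      rw [← Nat.factorization_def n p.2]
      exact Nat.factorization_eq_zero_of_not_dvd hnd
    simp [hf, this]
  have key : ∑ p ∈ s, f p = Real.log n := by
    rw [hs, Finset.sum_map]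
    simp only [hf, he, Function.Embedding.coeFn_mk]
    change ∑ x ∈ n.primeFactors.attach, (padicValNat (x : ℕ) n : ℝ) * Real.log ((x : ℕ) : ℝ) = Real.log n
    rw [Finset.sum_attach n.primeFactors
      (fun q => (padicValNat q n : ℝ) * Real.log q)]
    have : ∀ q ∈ n.primeFactors, (padicValNat q n : ℝ) * Real.log q
        = Real.log ((q : ℝ) ^ (n.factorization q)) := by
      intro q hq
      rw [Real.log_pow, Nat.factorization_def n (Nat.prime_of_mem_primeFactors hq)]
      try ring
    rw [Finset.sum_congr rfl this, ← Real.log_prod (fun q hq => by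
      have := (Nat.prime_of_mem_primeFactors hq).pos
      positivity)]
    congr 1
    exact_mod_cast congrArg (Nat.cast : ℕ → ℝ) (Nat.factorization_prod_pow_eq_self hn)
  exact key ▸ hasSum_sum_of_ne_finset_zero hvanish

theorem stmt_15 (x : ℚ) (hx : x ≠ 0) :
    HasSum (fun p : Nat.Primes => (-(padicValRat p x) : ℝ) * Real.log p)
      (-(Real.log |(x : ℝ)|)) := by
  have hnum : x.num ≠ 0 := Rat.num_ne_zero.2 hx
  have hnA : x.num.natAbs ≠ 0 := Int.natAbs_ne_zero.2 hnum
  have hden : (x.den : ℕ) ≠ 0 := x.den_nz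
  have h1 := aux_nat x.num.natAbs hnA
  have h2 := aux_nat x.den hden
  have h := h2.sub h1
  have hlog : Real.log x.den - Real.log x.num.natAbs = -(Real.log |(x : ℝ)|) := by
    rw [← Real.log_div (by exact_mod_cast hden) (by exact_mod_cast hnA), ← Real.log_inv]
    congr 1
    rw [Rat.cast_def, abs_div,
      abs_of_pos (a := (x.den:ℝ)) (by exact_mod_cast Nat.pos_of_ne_zero hden),
      ← Int.cast_abs, Int.abs_eq_natAbs, Int.cast_natCast, inv_div]
  rw [← hlog]
  refine h.congr_fun fun p => ?_
  have : padicValRat p x = (padicValNat p x.num.natAbs : ℤ) - padicValNat p x.den := by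
    rw [padicValRat_def, padicValInt]
  rw [this]
  simp only [Int.cast_sub, Int.cast_natCast]
  ring
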